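/- In the single-field General Lotto game with Scouts with budgets B, R > 0 and detection probability u ∈ [0,1], if u ≤ B/R ≤ 1, then the value of the game equals (u + B/R)/2. -/

import Mathlib

open MeasureTheory Set

open scoped ENNReal

noncomputable def unifM (R : ℝ) : Measure ℝ :=
  (ENNReal.ofReal (2*R))⁻¹ • volume.restrict (Icc 0 (2*R))

lemma unifM_apply (R : ℝ) {s : Set ℝ} (hs : MeasurableSet s) :
    unifM R s = (ENNReal.ofReal (2*R))⁻¹ * volume (s ∩ Icc 0 (2*R)) := by
  simp [unifM, Measure.restrict_apply hs]

lemma inv2R (R : ℝ) (hR : 0 < R) : (ENNReal.ofReal (2*R))⁻¹ = ENNReal.ofReal (1/(2*R)) := by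
  rw [one_div, ENNReal.ofReal_inv_of_pos (by linarith)]

lemma unifM_prob (R : ℝ) (hR : 0 < R) : IsProbabilityMeasure (unifM R) := by
  constructor
  rw [unifM_apply R MeasurableSet.univ, univ_inter, Real.volume_Icc,
    sub_zero, ENNReal.inv_mul_cancel (by simp; linarith) ENNReal.ofReal_ne_top]

lemma unifM_nonneg (R : ℝ) : unifM R (Iio 0) = 0 := by
  rw [unifM_apply R measurableSet_Iio]
  have : Iio (0:ℝ) ∩ Icc 0 (2*R) = ∅ := by
    ext x; simp only [mem_inter_iff, mem_Iio, mem_Icc, mem_empty_iff_false, iff_false]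
    rintro ⟨h1, h2, _⟩; linarith
  rw [this]; simp

lemma unifM_lint_id (R : ℝ) (hR : 0 < R) :
    ∫⁻ x, ENNReal.ofReal x ∂(unifM R) = ENNReal.ofReal R := by
  rw [unifM, lintegral_smul_measure]
  have h1 : ∫⁻ x in Icc 0 (2*R), ENNReal.ofReal x = ENNReal.ofReal (2*R^2) := by
    rw [← ofReal_integral_eq_lintegral_ofReal]
    · congr 1
      rw [integral_Icc_eq_integral_Ioc, ← intervalIntegral.integral_of_le (by linarith)]
      rw [integral_id]
      ring
    · exact continuous_id.integrableOn_Icc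
    · filter_upwards [ae_restrict_mem measurableSet_Icc] with x hx using hx.1
  rw [h1, inv2R R hR, smul_eq_mul, ← ENNReal.ofReal_mul (by positivity)]
  congr 1; field_simp

lemma unifM_Iic (R z : ℝ) (hR : 0 < R) : unifM R (Iic z) ≤ ENNReal.ofReal (1/(2*R)) * ENNReal.ofReal z := by
  rw [unifM_apply R measurableSet_Iic, inv2R R hR]
  gcongr
  calc volume (Iic z ∩ Icc 0 (2*R)) ≤ volume (Icc 0 z) := by
        apply measure_mono; rintro x ⟨h1, h2, _⟩; exact ⟨h2, h1⟩
    _ = ENNReal.ofReal z := by rw [Real.volume_Icc]; congr 1; ring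

lemma unifM_Ici (R x : ℝ) (hR : 0 < R) (hx : 0 ≤ x) :
    unifM R (Ici x) = ENNReal.ofReal (1 - x/(2*R)) := by
  rw [unifM_apply R measurableSet_Ici]
  have h1 : Ici x ∩ Icc 0 (2*R) = Icc x (2*R) := by
    ext y; simp only [mem_inter_iff, mem_Ici, mem_Icc]
    constructor
    · rintro ⟨h1, _, h3⟩; exact ⟨h1, h3⟩
    · rintro ⟨h1, h2⟩; exact ⟨h1, le_trans hx h1, h2⟩
  rw [h1, Real.volume_Icc, inv2R R hR, ← ENNReal.ofReal_mul (by positivity)]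
  congr 1; field_simp

lemma swap_lem (μ ν : Measure ℝ) [SFinite μ] [SFinite ν] :
    ∫⁻ x, ν {z | x ≤ z} ∂μ = ∫⁻ z, μ (Iic z) ∂ν := by
  have hs : MeasurableSet {p : ℝ × ℝ | p.1 ≤ p.2} :=
    measurableSet_le measurable_fst measurable_snd
  have huncurry : Function.uncurry
      (fun x z => ({p : ℝ × ℝ | p.1 ≤ p.2}.indicator (1 : ℝ × ℝ → ℝ≥0∞) (x, z))) =
      {p : ℝ × ℝ | p.1 ≤ p.2}.indicator 1 := funext fun p => by
    simp [Function.uncurry]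
  calc ∫⁻ x, ν {z | x ≤ z} ∂μ
      = ∫⁻ x, ∫⁻ z, {p : ℝ × ℝ | p.1 ≤ p.2}.indicator 1 (x, z) ∂ν ∂μ := by
        refine lintegral_congr fun x => ?_
        have h2 : ∀ z, ({p : ℝ × ℝ | p.1 ≤ p.2}.indicator (1 : ℝ × ℝ → ℝ≥0∞) (x, z))
            = ({z : ℝ | x ≤ z}.indicator (1 : ℝ → ℝ≥0∞) z) := fun z => by
          by_cases h : x ≤ z <;> simp [indicator, h]
        simp_rw [h2]
        rw [show {z : ℝ | x ≤ z} = Ici x from rfl, lintegral_indicator_one measurableSet_Ici]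
      _ = ∫⁻ z, ∫⁻ x, {p : ℝ × ℝ | p.1 ≤ p.2}.indicator 1 (x, z) ∂μ ∂ν := by
        apply lintegral_lintegral_swap
        rw [huncurry]
        exact ((measurable_one.indicator hs)).aemeasurable
      _ = ∫⁻ z, μ (Iic z) ∂ν := by
        refine lintegral_congr fun z => ?_
        have h2 : ∀ x, ({p : ℝ × ℝ | p.1 ≤ p.2}.indicator (1 : ℝ × ℝ → ℝ≥0∞) (x, z))
            = ((Iic z).indicator (1 : ℝ → ℝ≥0∞) x) := fun x => by
          by_cases h : x ≤ z <;> simp [indicator, h]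
        simp_rw [h2]
        rw [lintegral_indicator_one measurableSet_Iic]


lemma hhalf : (ENNReal.ofReal (1/2 : ℝ)) = 2⁻¹ := by
  rw [show (1:ℝ)/2 = ((2:ℝ))⁻¹ by norm_num, ENNReal.ofReal_inv_of_pos (by norm_num)]
  norm_num


/-- A strategy for Red in the General Lotto game with Scouts: the law of a nonnegative
random variable `X` with `E[X] ≤ R`. -/
structure RedStrategy (R : ℝ) where
  μ : Measure ℝ
  prob : IsProbabilityMeasure μ
  nonneg : μ (Iio 0) = 0
  budget : ∫⁻ x, ENNReal.ofReal x ∂μ ≤ ENNReal.ofReal R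

/-- A strategy for Blue in GL-S(B,R,u): a calling probability `t x ∈ [0,1]` used when
Red's allocation `x` is revealed (probability `u`), and the law `ν` of the nonnegative
allocation `Z` used when it is not revealed.  Feasibility: for every feasible Red
strategy, `u·E[t(X)·X] + (1-u)·E[Z] ≤ B`. -/
structure BlueStrategy (B R u : ℝ) where
  t : ℝ → ℝ
  t_mble : Measurable t
  t_mem : ∀ x, t x ∈ Icc (0 : ℝ) 1
  ν : Measure ℝ
  prob : IsProbabilityMeasure ν
  nonneg : ν (Iio 0) = 0
  budget : ∀ σR : RedStrategy R,
    ENNReal.ofReal u * ∫⁻ x, ENNReal.ofReal (t x * x) ∂σR.μ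
      + ENNReal.ofReal (1 - u) * ∫⁻ z, ENNReal.ofReal z ∂ν ≤ ENNReal.ofReal B

/-- Expected payoff to Blue (his win probability):
`u·E[t(X)] + (1-u)·P(Z ≥ X)`, ties going to Blue. -/
noncomputable def payoff {B R u : ℝ} (σB : BlueStrategy B R u) (σR : RedStrategy R) :
    ENNReal :=
  ENNReal.ofReal u * ∫⁻ x, ENNReal.ofReal (σB.t x) ∂σR.μ
    + ENNReal.ofReal (1 - u) * ∫⁻ x, σB.ν {z | x ≤ z} ∂σR.μ

/-- In GL-S(B,R,u) with B, R > 0, u ∈ [0,1] and u ≤ B/R ≤ 1, the value of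
the game equals (u + B/R)/2: there are strategies for Blue and Red guaranteeing this
payoff against any opponent strategy. -/
theorem stmt_8 (B R u : ℝ) (hB : 0 < B) (hR : 0 < R) (hu : u ∈ Icc (0 : ℝ) 1)
    (h1 : u ≤ B / R) (h2 : B / R ≤ 1) :
    ∃ (σB : BlueStrategy B R u) (σR : RedStrategy R),
      (∀ σR' : RedStrategy R, ENNReal.ofReal ((u + B / R) / 2) ≤ payoff σB σR') ∧
      (∀ σB' : BlueStrategy B R u, payoff σB' σR ≤ ENNReal.ofReal ((u + B / R) / 2)) := by
  obtain ⟨hu0, hu1⟩ := hu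
  have h2R : (0:ℝ) < 2*R := by linarith
  set p : ℝ := if u = 1 then 0 else (B/R - u)/(1-u) with hpdef
  have hp0 : 0 ≤ p := by
    rw [hpdef]; split_ifs with h
    · exact le_refl 0
    · have hlt : u < 1 := lt_of_le_of_ne hu1 h
      exact div_nonneg (by linarith) (by linarith)
  have hp1 : p ≤ 1 := by
    rw [hpdef]; split_ifs with h
    · exact zero_le_one
    · have hlt : u < 1 := lt_of_le_of_ne hu1 h
      rw [div_le_one (by linarith)]; linarith
  have hkey : u * R + (1-u) * (p * R) = B := by
    rw [hpdef]; split_ifs with h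
    · have hBR1 : B / R = 1 := le_antisymm h2 (h ▸ h1)
      have hBR : B = R := by
        field_simp at hBR1; linarith
      rw [h]; simp [hBR]
    · have hlt : u < 1 := lt_of_le_of_ne hu1 h
      have h1u : (1:ℝ) - u ≠ 0 := ne_of_gt (by linarith)
      have e1 : (1-u) * ((B/R - u)/(1-u) * R) = (B/R - u) * R := by
        field_simp
      rw [e1, sub_mul, div_mul_cancel₀ _ hR.ne']
      ring
  haveI hPU := unifM_prob R hR
  let σR : RedStrategy R := ⟨unifM R, hPU, unifM_nonneg R, le_of_eq (unifM_lint_id R hR)⟩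
  let ν : Measure ℝ := ENNReal.ofReal p • unifM R + ENNReal.ofReal (1-p) • Measure.dirac 0
  have hν_lint : ∫⁻ z, ENNReal.ofReal z ∂ν = ENNReal.ofReal (p*R) := by
    simp only [ν, lintegral_add_measure, lintegral_smul_measure, lintegral_dirac,
      unifM_lint_id R hR, smul_eq_mul, ENNReal.ofReal_zero, mul_zero, add_zero,
      ← ENNReal.ofReal_mul hp0]
  have hν_prob : IsProbabilityMeasure ν := by
    constructor
    simp only [ν, Measure.add_apply, Measure.smul_apply, smul_eq_mul, measure_univ,
      mul_one]
    rw [← ENNReal.ofReal_add hp0 (by linarith : (0:ℝ) ≤ 1-p)]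
    simp
  have hν_nonneg : ν (Iio 0) = 0 := by
    simp only [ν, Measure.add_apply, Measure.smul_apply, smul_eq_mul, unifM_nonneg R,
      mul_zero, zero_add, Measure.dirac_apply' _ measurableSet_Iio]
    simp
  have hbudget : ∀ σR' : RedStrategy R,
      ENNReal.ofReal u * ∫⁻ x, ENNReal.ofReal ((fun _ => (1:ℝ)) x * x) ∂σR'.μ
        + ENNReal.ofReal (1-u) * ∫⁻ z, ENNReal.ofReal z ∂ν ≤ ENNReal.ofReal B := by
    intro σR'
    rw [hν_lint]
    calc ENNReal.ofReal u * ∫⁻ x, ENNReal.ofReal ((fun _ => (1:ℝ)) x * x) ∂σR'.μ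
          + ENNReal.ofReal (1-u) * ENNReal.ofReal (p*R)
        ≤ ENNReal.ofReal u * ENNReal.ofReal R + ENNReal.ofReal (1-u) * ENNReal.ofReal (p*R) := by
          gcongr
          simpa using σR'.budget
      _ = ENNReal.ofReal B := by
          rw [← ENNReal.ofReal_mul hu0, ← ENNReal.ofReal_mul (by linarith : (0:ℝ) ≤ 1-u),
            ← ENNReal.ofReal_add (by positivity) (mul_nonneg (by linarith) (by positivity)),
            hkey]
  let σB : BlueStrategy B R u :=
    ⟨fun _ => 1, measurable_const, fun _ => ⟨zero_le_one, le_refl 1⟩, ν, hν_prob, hν_nonneg,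
      hbudget⟩
  refine ⟨σB, σR, ?_, ?_⟩
  · -- lower bound for Blue
    intro σR'
    haveI := σR'.prob
    have hae : ∀ᵐ x ∂σR'.μ, 0 ≤ x := by
      rw [ae_iff]
      have : {x : ℝ | ¬ 0 ≤ x} = Iio 0 := by ext x; simp [not_le]
      rw [this, σR'.nonneg]
    have hxint : ∫⁻ x, ENNReal.ofReal (1/(2*R) * x) ∂σR'.μ ≤ 2⁻¹ := by
      have e : ∀ x : ℝ, ENNReal.ofReal (1/(2*R) * x)
          = ENNReal.ofReal (1/(2*R)) * ENNReal.ofReal x := fun x =>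
        ENNReal.ofReal_mul (by positivity)
      simp_rw [e]
      rw [lintegral_const_mul _ ENNReal.measurable_ofReal]
      calc ENNReal.ofReal (1/(2*R)) * ∫⁻ x, ENNReal.ofReal x ∂σR'.μ
          ≤ ENNReal.ofReal (1/(2*R)) * ENNReal.ofReal R := by gcongr; exact σR'.budget
        _ = 2⁻¹ := by
            rw [← ENNReal.ofReal_mul (by positivity), ← hhalf]
            congr 1; field_simp
    have hmg : Measurable fun x : ℝ => ENNReal.ofReal (1/(2*R) * x) :=
      (measurable_const.mul measurable_id).ennreal_ofReal
    have hK : (2:ℝ≥0∞)⁻¹ ≤ ∫⁻ x, ENNReal.ofReal (1 - x/(2*R)) ∂σR'.μ := by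
      have step : ∫⁻ x, (1 - ENNReal.ofReal (1/(2*R) * x)) ∂σR'.μ
          ≤ ∫⁻ x, ENNReal.ofReal (1 - x/(2*R)) ∂σR'.μ := by
        refine lintegral_mono_ae ?_
        filter_upwards [hae] with x hx
        rw [show (1:ℝ≥0∞) = ENNReal.ofReal 1 from ENNReal.ofReal_one.symm,
          ← ENNReal.ofReal_sub _ (by positivity)]
        exact ENNReal.ofReal_le_ofReal (le_of_eq (by ring))
      calc (2:ℝ≥0∞)⁻¹ = 1 - 2⁻¹ := ENNReal.one_sub_inv_two.symm
        _ ≤ 1 - ∫⁻ x, ENNReal.ofReal (1/(2*R) * x) ∂σR'.μ := tsub_le_tsub_left hxint 1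
        _ = ∫⁻ x, 1 ∂σR'.μ - ∫⁻ x, ENNReal.ofReal (1/(2*R) * x) ∂σR'.μ := by
            rw [lintegral_one, measure_univ]
        _ ≤ ∫⁻ x, (1 - ENNReal.ofReal (1/(2*R) * x)) ∂σR'.μ := lintegral_sub_le _ _ hmg
        _ ≤ _ := step
    have hJ : ENNReal.ofReal p * 2⁻¹ ≤ ∫⁻ x, ν {z | x ≤ z} ∂σR'.μ := by
      calc ENNReal.ofReal p * 2⁻¹
          ≤ ENNReal.ofReal p * ∫⁻ x, ENNReal.ofReal (1 - x/(2*R)) ∂σR'.μ := by gcongr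
        _ = ∫⁻ x, ENNReal.ofReal p * ENNReal.ofReal (1 - x/(2*R)) ∂σR'.μ :=
            (lintegral_const_mul _ ((measurable_const.sub
              (measurable_id.div_const _)).ennreal_ofReal)).symm
        _ ≤ ∫⁻ x, ν {z | x ≤ z} ∂σR'.μ := by
            refine lintegral_mono_ae ?_
            filter_upwards [hae] with x hx
            calc ENNReal.ofReal p * ENNReal.ofReal (1 - x/(2*R))
                = ENNReal.ofReal p * unifM R (Ici x) := by rw [unifM_Ici R x hR hx]
              _ ≤ ν (Ici x) := by
                  simp only [ν, Measure.add_apply, Measure.smul_apply, smul_eq_mul]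
                  exact le_self_add
              _ = ν {z | x ≤ z} := rfl
    have value_eq : ENNReal.ofReal ((u + B/R)/2)
        ≤ ENNReal.ofReal u + ENNReal.ofReal (1-u) * (ENNReal.ofReal p * 2⁻¹) := by
      by_cases h : u = 1
      · have hBR1 : B / R = 1 := le_antisymm h2 (h ▸ h1)
        subst h
        rw [hBR1]
        norm_num
      · have hlt : u < 1 := lt_of_le_of_ne hu1 h
        have h1u : (1:ℝ) - u ≠ 0 := ne_of_gt (by linarith)
        have e : (u + B/R)/2 = u + (1-u) * (p * (1/2)) := by
          rw [hpdef, if_neg h]; field_simp; ring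
        rw [e, ENNReal.ofReal_add hu0 (mul_nonneg (by linarith) (by positivity)),
          ENNReal.ofReal_mul (by linarith : (0:ℝ) ≤ 1-u), ENNReal.ofReal_mul hp0, hhalf]
    have hT : ∫⁻ x, ENNReal.ofReal ((fun _ => (1:ℝ)) x) ∂σR'.μ = 1 := by
      simp
    calc ENNReal.ofReal ((u + B/R)/2)
        ≤ ENNReal.ofReal u + ENNReal.ofReal (1-u) * (ENNReal.ofReal p * 2⁻¹) := value_eq
      _ ≤ ENNReal.ofReal u * ∫⁻ x, ENNReal.ofReal ((fun _ => (1:ℝ)) x) ∂σR'.μ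
          + ENNReal.ofReal (1-u) * ∫⁻ x, ν {z | x ≤ z} ∂σR'.μ := by
          rw [hT, mul_one]
          gcongr
      _ = payoff σB σR' := rfl
  · -- upper bound for Red
    intro σB'
    haveI := σB'.prob
    have haeU : ∀ᵐ x ∂(unifM R), x ∈ Icc 0 (2*R) := by
      rw [ae_iff]
      have : {x : ℝ | ¬ x ∈ Icc 0 (2*R)} = (Icc (0:ℝ) (2*R))ᶜ := rfl
      rw [this, unifM_apply R measurableSet_Icc.compl, compl_inter_self, measure_empty,
        mul_zero]
    have hbud : ENNReal.ofReal u * ∫⁻ x, ENNReal.ofReal (σB'.t x * x) ∂(unifM R)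
        + ENNReal.ofReal (1-u) * ∫⁻ z, ENNReal.ofReal z ∂σB'.ν ≤ ENNReal.ofReal B :=
      σB'.budget σR
    have hImeas : Measurable fun x => ENNReal.ofReal (σB'.t x * x) :=
      (σB'.t_mble.mul measurable_id).ennreal_ofReal
    have hxint2 : ∫⁻ x, ENNReal.ofReal (x/(2*R)) ∂(unifM R) = 2⁻¹ := by
      have e : ∀ x : ℝ, ENNReal.ofReal (x/(2*R))
          = ENNReal.ofReal (1/(2*R)) * ENNReal.ofReal x := fun x => by
        rw [← ENNReal.ofReal_mul (by positivity)]; congr 1; ring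
      rw [lintegral_congr e]
      rw [lintegral_const_mul _ ENNReal.measurable_ofReal, unifM_lint_id R hR,
        ← ENNReal.ofReal_mul (by positivity), ← hhalf]
      congr 1; field_simp
    have hhalfint : ∫⁻ x, ENNReal.ofReal (1 - x/(2*R)) ∂(unifM R) = 2⁻¹ := by
      have congr1 : ∫⁻ x, ENNReal.ofReal (1 - x/(2*R)) ∂(unifM R)
          = ∫⁻ x, (1 - ENNReal.ofReal (x/(2*R))) ∂(unifM R) := by
        refine lintegral_congr_ae ?_
        filter_upwards [haeU] with x hx
        rw [ENNReal.ofReal_sub _ (div_nonneg hx.1 (by linarith))]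
        · simp
      have hg : Measurable fun x : ℝ => ENNReal.ofReal (x/(2*R)) :=
        (measurable_id'.div_const _).ennreal_ofReal
      rw [congr1, lintegral_sub hg
        (by rw [hxint2]; exact (by norm_num : (2:ℝ≥0∞)⁻¹ ≠ ⊤))
        (by filter_upwards [haeU] with x hx
            exact ENNReal.ofReal_le_one.2 ((div_le_one h2R).2 hx.2)),
        lintegral_one, measure_univ, hxint2]
      exact ENNReal.one_sub_inv_two
    have hTa : ∫⁻ x, ENNReal.ofReal (σB'.t x) ∂(unifM R)
        ≤ 2⁻¹ + ENNReal.ofReal (1/(2*R)) * ∫⁻ x, ENNReal.ofReal (σB'.t x * x) ∂(unifM R) := by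
      have step1 : ∫⁻ x, ENNReal.ofReal (σB'.t x) ∂(unifM R)
          ≤ ∫⁻ x, (ENNReal.ofReal (1/(2*R)) * ENNReal.ofReal (σB'.t x * x)
              + ENNReal.ofReal (1 - x/(2*R))) ∂(unifM R) := by
        refine lintegral_mono_ae ?_
        filter_upwards [haeU] with x hx
        obtain ⟨ht0, ht1⟩ := σB'.t_mem x
        rw [← ENNReal.ofReal_mul (by positivity),
          ← ENNReal.ofReal_add (mul_nonneg (by positivity) (mul_nonneg ht0 hx.1)) (by
            have := hx.2
            have h3 : x/(2*R) ≤ 1 := (div_le_one h2R).2 this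
            linarith)]
        apply ENNReal.ofReal_le_ofReal
        have expand : 1/(2*R)*(σB'.t x * x) + (1 - x/(2*R))
            = (σB'.t x * x + (2*R - x))/(2*R) := by field_simp
        rw [expand, le_div_iff₀ h2R]
        nlinarith [mul_nonneg (sub_nonneg.2 ht1) (sub_nonneg.2 hx.2)]
      calc ∫⁻ x, ENNReal.ofReal (σB'.t x) ∂(unifM R) ≤ _ := step1
        _ = ENNReal.ofReal (1/(2*R)) * ∫⁻ x, ENNReal.ofReal (σB'.t x * x) ∂(unifM R)
            + 2⁻¹ := by
            rw [lintegral_add_left (hImeas.const_mul _), lintegral_const_mul _ hImeas,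
              hhalfint]
        _ = _ := add_comm _ _
    have hW : ∫⁻ x, σB'.ν {z | x ≤ z} ∂(unifM R)
        ≤ ENNReal.ofReal (1/(2*R)) * ∫⁻ z, ENNReal.ofReal z ∂σB'.ν := by
      rw [swap_lem]
      calc ∫⁻ z, unifM R (Iic z) ∂σB'.ν
          ≤ ∫⁻ z, ENNReal.ofReal (1/(2*R)) * ENNReal.ofReal z ∂σB'.ν :=
            lintegral_mono fun z => unifM_Iic R z hR
        _ = _ := lintegral_const_mul _ ENNReal.measurable_ofReal
    calc payoff σB' σR
        = ENNReal.ofReal u * ∫⁻ x, ENNReal.ofReal (σB'.t x) ∂(unifM R)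
          + ENNReal.ofReal (1-u) * ∫⁻ x, σB'.ν {z | x ≤ z} ∂(unifM R) := rfl
      _ ≤ ENNReal.ofReal u * (2⁻¹ + ENNReal.ofReal (1/(2*R))
            * ∫⁻ x, ENNReal.ofReal (σB'.t x * x) ∂(unifM R))
          + ENNReal.ofReal (1-u) * (ENNReal.ofReal (1/(2*R))
            * ∫⁻ z, ENNReal.ofReal z ∂σB'.ν) := by gcongr
      _ = ENNReal.ofReal u * 2⁻¹ + ENNReal.ofReal (1/(2*R))
            * (ENNReal.ofReal u * ∫⁻ x, ENNReal.ofReal (σB'.t x * x) ∂(unifM R)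
              + ENNReal.ofReal (1-u) * ∫⁻ z, ENNReal.ofReal z ∂σB'.ν) := by ring
      _ ≤ ENNReal.ofReal u * 2⁻¹ + ENNReal.ofReal (1/(2*R)) * ENNReal.ofReal B := by
          gcongr
      _ = ENNReal.ofReal ((u + B/R)/2) := by
          rw [← hhalf, ← ENNReal.ofReal_mul hu0, ← ENNReal.ofReal_mul (by positivity),
            ← ENNReal.ofReal_add (by positivity) (by positivity)]
          congr 1; field_simp
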